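/- For all α, β ∈ Ĩ, 0 ≤ ϱ(α, β) ≤ 1, and ϱ(α, β) = 0 if and only if α = β. -/
import Mathlib


/-- The set of intuitionistic fuzzy values (IFVs). -/
def Itilde : Set (ℝ × ℝ) :=
  {p | 0 ≤ p.1 ∧ p.1 ≤ 1 ∧ 0 ≤ p.2 ∧ p.2 ≤ 1 ∧ p.1 + p.2 ≤ 1}

/-- Score degree `s(α) = μ_α - ν_α`. -/
def score (p : ℝ × ℝ) : ℝ := p.1 - p.2

/-- Accuracy degree `h(α) = μ_α + ν_α`. -/
def accuracy (p : ℝ × ℝ) : ℝ := p.1 + p.2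

/-- The distance measure `ϱ` of Wu et al. -/
noncomputable def vrho (a b : ℝ × ℝ) : ℝ :=
  if score a ≠ score b then (1 + |score a - score b|) / 3
  else |accuracy a - accuracy b| / 3

/-- For all `α, β ∈ Ĩ`, `0 ≤ ϱ(α, β) ≤ 1`, and `ϱ(α, β) = 0` iff `α = β`. -/
theorem vrho_nonneg_le_one_and_eq_zero_iff
    (a b : ℝ × ℝ) (ha : a ∈ Itilde) (hb : b ∈ Itilde) :
    0 ≤ vrho a b ∧ vrho a b ≤ 1 ∧ (vrho a b = 0 ↔ a = b) := by
  obtain ⟨ha1, ha2, ha3, ha4, ha5⟩ := ha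
  obtain ⟨hb1, hb2, hb3, hb4, hb5⟩ := hb
  unfold vrho score accuracy at *
  by_cases h : a.1 - a.2 ≠ b.1 - b.2
  · rw [if_pos h]
    have habs : |a.1 - a.2 - (b.1 - b.2)| ≤ 2 := by
      rw [abs_le]; constructor <;> nlinarith
    refine ⟨by positivity, by linarith, ?_⟩
    constructor
    · intro h0
      have := abs_nonneg (a.1 - a.2 - (b.1 - b.2))
      nlinarith
    · intro h0; exact absurd (by rw [h0]) h
  · push_neg at h
    rw [if_neg (by simpa using h)]
    have habs : |a.1 + a.2 - (b.1 + b.2)| ≤ 1 := by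
      rw [abs_le]; constructor <;> nlinarith
    refine ⟨by positivity, by linarith, ?_⟩
    constructor
    · intro h0
      have h1 : |a.1 + a.2 - (b.1 + b.2)| = 0 := by linarith
      rw [abs_eq_zero] at h1
      have : a.1 = b.1 := by linarith
      have : a.2 = b.2 := by linarith
      exact Prod.ext ‹a.1 = b.1› ‹a.2 = b.2›
    · intro h0; rw [h0]; simp
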